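/- In the whitening setup, applying W to the tensor T = Σ_j λ_j (A)_j^{⊗3} gives T(W,W,W) = Σ_j μ_j v_j^{⊗3}, where μ_j = λ_j / λ̃_j^{3/2} and v_j = √(λ̃_j) W^T (A)_j form an orthonormal basis of R^k. -/

import Mathlib

open Matrix

lemma sum_mul_sum_mul_sum {n : ℕ} (f g h : Fin n → ℝ) :
    (∑ a, f a) * (∑ b, g b) * (∑ c, h c)
      = ∑ a, ∑ b, ∑ c, f a * g b * h c := by
  rw [Finset.sum_mul_sum, Finset.sum_mul]
  refine Finset.sum_congr rfl fun a _ => ?_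
  rw [Finset.sum_mul]
  refine Finset.sum_congr rfl fun b _ => ?_
  rw [Finset.mul_sum]

/-- In the whitening setup, applying `W` to the tensor
`T = Σ_j λ_j (A)_j^{⊗3}` gives `T(W,W,W) = Σ_j μ_j v_j^{⊗3}` where
`μ_j = λ_j / λ̃_j^{3/2}` and `v_j = √λ̃_j · Wᵀ (A)_j` form an orthonormal basis of `ℝ^k`.
Stated entrywise, together with orthonormality of the `v_j`. -/
theorem whitened_tensor_decomposition
    (d k : ℕ) (hkd : k ≤ d)
    (A : Matrix (Fin d) (Fin k) ℝ) (hA : A.rank = k)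
    (lam lamt : Fin k → ℝ) (hlamt : ∀ j, 0 < lamt j)
    (U : Matrix (Fin d) (Fin k) ℝ) (hU : Uᵀ * U = 1)
    (γ : Fin k → ℝ) (hγ : ∀ j, 0 < γ j)
    (hSVD : U * diagonal γ * Uᵀ = A * diagonal lamt * Aᵀ)
    (W : Matrix (Fin d) (Fin k) ℝ)
    (hW : W = U * diagonal (fun j => (Real.sqrt (γ j))⁻¹))
    (T : Fin d → Fin d → Fin d → ℝ)
    (hT : ∀ a b c, T a b c = ∑ j, lam j * A a j * A b j * A c j)
    (v : Fin k → Fin k → ℝ)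
    (hv : ∀ j i, v j i = Real.sqrt (lamt j) * ∑ a, W a i * A a j) :
    (∀ i j l : Fin k,
        (∑ a, ∑ b, ∑ c, T a b c * W a i * W b j * W c l)
          = ∑ j', (lam j' / Real.sqrt (lamt j') ^ 3) * v j' i * v j' j * v j' l)
      ∧ (∀ j1 j2 : Fin k, (∑ i, v j1 i * v j2 i) = if j1 = j2 then 1 else 0) := by
  have hs : ∀ j, Real.sqrt (lamt j) ≠ 0 := fun j =>
    ne_of_gt (Real.sqrt_pos.mpr (hlamt j))
  constructor
  · intro i j l
    have step1 : (∑ a, ∑ b, ∑ c, T a b c * W a i * W b j * W c l)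
        = ∑ j', ∑ a, ∑ b, ∑ c,
            lam j' * A a j' * A b j' * A c j' * W a i * W b j * W c l := by
      simp only [hT, Finset.sum_mul]
      calc (∑ a, ∑ b, ∑ c, ∑ j', lam j' * A a j' * A b j' * A c j' * W a i * W b j * W c l)
          = ∑ a, ∑ b, ∑ j', ∑ c, lam j' * A a j' * A b j' * A c j' * W a i * W b j * W c l :=
            Finset.sum_congr rfl fun a _ => Finset.sum_congr rfl fun b _ => Finset.sum_comm
        _ = ∑ a, ∑ j', ∑ b, ∑ c, lam j' * A a j' * A b j' * A c j' * W a i * W b j * W c l :=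
            Finset.sum_congr rfl fun a _ => Finset.sum_comm
        _ = ∑ j', ∑ a, ∑ b, ∑ c, lam j' * A a j' * A b j' * A c j' * W a i * W b j * W c l :=
            Finset.sum_comm
    rw [step1]
    refine Finset.sum_congr rfl fun j' _ => ?_
    rw [hv, hv, hv]
    have hr : (lam j' / Real.sqrt (lamt j') ^ 3)
          * (Real.sqrt (lamt j') * ∑ a, W a i * A a j')
          * (Real.sqrt (lamt j') * ∑ b, W b j * A b j')
          * (Real.sqrt (lamt j') * ∑ c, W c l * A c j')
        = lam j' * ((∑ a, W a i * A a j') * (∑ b, W b j * A b j')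
            * (∑ c, W c l * A c j')) := by
      have h3 : Real.sqrt (lamt j') ^ 3 ≠ 0 := pow_ne_zero _ (hs j')
      field_simp
      rw [div_eq_iff (hs j')]; ring
    rw [hr, sum_mul_sum_mul_sum, Finset.mul_sum]
    refine Finset.sum_congr rfl fun a _ => ?_
    rw [Finset.mul_sum]
    refine Finset.sum_congr rfl fun b _ => ?_
    rw [Finset.mul_sum]
    refine Finset.sum_congr rfl fun c _ => ?_
    ring
  · intro j1 j2
    set B : Matrix (Fin k) (Fin k) ℝ :=
      diagonal (fun j => Real.sqrt (lamt j)) * (Aᵀ * W) with hB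
    have hBv : ∀ j i, B j i = v j i := by
      intro j i
      rw [hB, hv, Matrix.diagonal_mul, Matrix.mul_apply, Finset.mul_sum,
        Finset.mul_sum]
      refine Finset.sum_congr rfl fun a _ => ?_
      rw [transpose_apply]; ring
    have hdd : (diagonal fun j => Real.sqrt (lamt j)) *
        (diagonal fun j => Real.sqrt (lamt j)) = diagonal lamt := by
      rw [diagonal_mul_diagonal]
      exact congrArg diagonal (funext fun j => Real.mul_self_sqrt (hlamt j).le)
    have hBtB : Bᵀ * B = 1 := by
      have e1 : Bᵀ * B = Wᵀ * (A * diagonal lamt * Aᵀ) * W := by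
        rw [hB]
        simp only [transpose_mul, diagonal_transpose, transpose_transpose]
        rw [show (Wᵀ * A) * diagonal (fun j => Real.sqrt (lamt j)) *
              ((diagonal fun j => Real.sqrt (lamt j)) * (Aᵀ * W))
            = Wᵀ * A * ((diagonal fun j => Real.sqrt (lamt j)) *
              (diagonal fun j => Real.sqrt (lamt j))) * (Aᵀ * W) by
          simp only [Matrix.mul_assoc]]
        rw [hdd]
        simp only [Matrix.mul_assoc]
      rw [e1, ← hSVD, hW]
      simp only [transpose_mul, diagonal_transpose]
      rw [show (diagonal fun j => (Real.sqrt (γ j))⁻¹) * Uᵀ *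
          (U * diagonal γ * Uᵀ) * (U * diagonal fun j => (Real.sqrt (γ j))⁻¹)
          = (diagonal fun j => (Real.sqrt (γ j))⁻¹) * ((Uᵀ * U) * (diagonal γ *
            ((Uᵀ * U) * (diagonal fun j => (Real.sqrt (γ j))⁻¹)))) by
        simp only [Matrix.mul_assoc]]
      rw [hU, Matrix.one_mul, Matrix.one_mul, diagonal_mul_diagonal, diagonal_mul_diagonal]
      rw [show (1 : Matrix (Fin k) (Fin k) ℝ) = diagonal (fun _ => 1) from
        (diagonal_one).symm]
      refine congrArg diagonal (funext fun j => ?_)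
      have hne : Real.sqrt (γ j) ≠ 0 := ne_of_gt (Real.sqrt_pos.2 (hγ j))
      have hsq : Real.sqrt (γ j) * Real.sqrt (γ j) = γ j :=
        Real.mul_self_sqrt (hγ j).le
      field_simp
      rw [Real.sq_sqrt (hγ j).le]
    have hBBt : B * Bᵀ = 1 := mul_eq_one_comm.mp hBtB
    have he := congrFun (congrFun hBBt j1) j2
    rw [Matrix.mul_apply] at he
    simp only [transpose_apply, hBv] at he
    rw [he, Matrix.one_apply]
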